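/- arXiv:1706.07064 — 2 statements merged into one kernel-verified Lean document; each statement's English description precedes it below -/
import Mathlib

section
/- For n ≥ 2, every B-avoiding permutation of {1,...,n} lies in the union of the images of the four maps f_before, f_after, f_end, f_bump applied to the B-avoiding permutations of {1,...,n-1}. -/
/-- `l` is a permutation of `{1, ..., n}`, viewed as the sequence of its values. -/
def IsPermOf (l : List ℕ) (n : ℕ) : Prop := l.Perm (List.range' 1 n)

/-- `l` is B-avoiding: there are no indices `a < b < c < d` with
`max {l a, l c} < min {l b, l d}`. -/
def BAvoid (l : List ℕ) : Prop :=
  ∀ a b c d : Fin l.length, a < b → b < c → c < d →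
    ¬ (max (l.get a) (l.get c) < min (l.get b) (l.get d))

/-- increase all values by 1 and insert `1` immediately before the value `2`. -/
def fBefore (σ : List ℕ) : List ℕ :=
  ((σ.map (· + 1)).take ((σ.map (· + 1)).idxOf 2)) ++
    1 :: ((σ.map (· + 1)).drop ((σ.map (· + 1)).idxOf 2))

/-- increase all values by 1 and insert `1` immediately after the value `2`. -/
def fAfter (σ : List ℕ) : List ℕ :=
  ((σ.map (· + 1)).take ((σ.map (· + 1)).idxOf 2 + 1)) ++
    1 :: ((σ.map (· + 1)).drop ((σ.map (· + 1)).idxOf 2 + 1))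

/-- increase all values by 1 and append `1` at the end. -/
def fEnd (σ : List ℕ) : List ℕ := σ.map (· + 1) ++ [1]

/-- increase all values by 1, replace the value `2` by `1`, and append `2` at the end. -/
def fBump (σ : List ℕ) : List ℕ :=
  (σ.map (· + 1)).map (fun x => if x = 2 then 1 else x) ++ [2]


open List

lemma bavoid_iff (l : List ℕ) : BAvoid l ↔
    ∀ w x y z : ℕ, [w,x,y,z] <+ l → ¬ (max w y < min x z) := by
  constructor
  · intro h w x y z hsub
    obtain ⟨is, hmap, hpw⟩ := List.sublist_eq_map_getElem hsub
    match is, hmap, hpw with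
    | [a,b,c,d], hmap, hpw =>
      simp only [List.map_cons, List.map_nil, List.cons.injEq, and_true] at hmap
      obtain ⟨hw, hx, hy, hz⟩ := hmap
      simp only [List.pairwise_cons, List.forall_mem_cons, List.forall_mem_nil] at hpw
      subst hw hx hy hz
      exact h a b c d hpw.1.1 hpw.2.1.1 hpw.2.2.1.1
  · intro h a b c d hab hbc hcd
    have hsub : [l.get a, l.get b, l.get c, l.get d] <+ l := by
      have hab' : (a:ℕ) < b := hab
      have hbc' : (b:ℕ) < c := hbc
      have hcd' : (c:ℕ) < d := hcd
      have : List.map l.get [a,b,c,d] <+ l := by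
        apply List.map_getElem_sublist
        simp only [List.pairwise_cons, List.forall_mem_cons, List.forall_mem_nil]
        refine ⟨⟨?_,?_,?_,List.forall_mem_nil _⟩,⟨?_,?_,List.forall_mem_nil _⟩,⟨?_,List.forall_mem_nil _⟩,List.forall_mem_nil _,List.Pairwise.nil⟩ <;> omega
      simpa using this
    exact h _ _ _ _ hsub

lemma BAvoid.sublist' {l l' : List ℕ} (h : l' <+ l) (hB : BAvoid l) : BAvoid l' := by
  rw [bavoid_iff] at *
  exact fun w x y z hs => hB w x y z (hs.trans h)

lemma BAvoid.map' {l : List ℕ} (g : ℕ → ℕ)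
    (hg : ∀ x ∈ l, ∀ y ∈ l, g x < g y → x < y) (hB : BAvoid l) :
    BAvoid (l.map g) := by
  rw [bavoid_iff] at *
  intro w x y z hsub
  rw [List.sublist_map_iff] at hsub
  obtain ⟨l', hl', hmap⟩ := hsub
  match l', hmap with
  | [w',x',y',z'], hmap =>
    simp only [List.map_cons, List.map_nil, List.cons.injEq, and_true] at hmap
    obtain ⟨hw, hx, hy, hz⟩ := hmap
    subst hw hx hy hz
    have hmw : w' ∈ l := hl'.subset (by simp)
    have hmx : x' ∈ l := hl'.subset (by simp)
    have hmy : y' ∈ l := hl'.subset (by simp)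
    have hmz : z' ∈ l := hl'.subset (by simp)
    intro hlt
    have h1 : g w' < g x' := lt_of_le_of_lt (le_max_left _ _) (lt_of_lt_of_le hlt (min_le_left _ _))
    have h2 : g w' < g z' := lt_of_le_of_lt (le_max_left _ _) (lt_of_lt_of_le hlt (min_le_right _ _))
    have h3 : g y' < g x' := lt_of_le_of_lt (le_max_right _ _) (lt_of_lt_of_le hlt (min_le_left _ _))
    have h4 : g y' < g z' := lt_of_le_of_lt (le_max_right _ _) (lt_of_lt_of_le hlt (min_le_right _ _))
    have := hg _ hmw _ hmx h1
    have := hg _ hmw _ hmz h2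
    have := hg _ hmy _ hmx h3
    have := hg _ hmy _ hmz h4
    have hbad : max w' y' < min x' z' := by
      simp only [max_lt_iff, lt_min_iff]; omega
    exact hB w' x' y' z' hl' hbad

lemma map_sub_one_range' (m s : ℕ) :
    (List.range' (s+1) m).map (· - 1) = List.range' s m := by
  induction m generalizing s with
  | zero => simp
  | succ m ih =>
    rw [List.range'_succ, List.range'_succ]
    simp [ih (s+1)]

lemma indexOf_append_cons {A B : List ℕ} {a : ℕ} (h : a ∉ A) :
    (A ++ a :: B).idxOf a = A.length := by
  induction A with
  | nil => simp
  | cons x A ih =>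
    simp only [List.mem_cons, not_or] at h
    simp [List.idxOf_cons, List.cons_append, Ne.symm h.1, ih h.2, beq_iff_eq, h.1]

lemma perm_aux {L : List ℕ} {n : ℕ} (hn : 1 ≤ n)
    (h : (1 :: L).Perm (List.range' 1 n)) :
    (L.map (· - 1)).Perm (List.range' 1 (n-1)) := by
  have hr : List.range' 1 n = 1 :: List.range' 2 (n-1) := by
    rw [show n = (n-1)+1 by omega, List.range'_succ]
    norm_num
  rw [hr] at h
  have h2 : L.Perm (List.range' 2 (n-1)) := (List.perm_cons 1).mp h
  have := h2.map (· - 1)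
  rwa [map_sub_one_range' (n-1) 1] at this


theorem stmt9 (n : ℕ) (hn : 2 ≤ n) (π : List ℕ)
    (hπ : IsPermOf π n) (hB : BAvoid π) :
    ∃ σ : List ℕ, IsPermOf σ (n - 1) ∧ BAvoid σ ∧
      (fBefore σ = π ∨ fAfter σ = π ∨ fEnd σ = π ∨ fBump σ = π) := by
  have hlen : π.length = n := by simpa using hπ.length_eq
  have hnd : π.Nodup := hπ.nodup_iff.mpr (List.nodup_range' (s := 1) (n := n))
  have hmem : ∀ x ∈ π, 1 ≤ x ∧ x < 1 + n := by
    intro x hx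
    have := hπ.mem_iff.mp hx
    rwa [List.mem_range'_1] at this
  have h1 : (1:ℕ) ∈ π := hπ.mem_iff.mpr (by rw [List.mem_range'_1]; omega)
  have h2 : (2:ℕ) ∈ π := hπ.mem_iff.mpr (by rw [List.mem_range'_1]; omega)
  have hi : π.idxOf 1 < π.length := List.idxOf_lt_length_iff.mpr h1
  have hj : π.idxOf 2 < π.length := List.idxOf_lt_length_iff.mpr h2
  set i := π.idxOf 1 with hidef
  set j := π.idxOf 2 with hjdef
  have hgi : π.get ⟨i, hi⟩ = 1 := List.idxOf_get hi
  have hgj : π.get ⟨j, hj⟩ = 2 := List.idxOf_get hj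
  have hij : i ≠ j := by
    intro h
    have : π.get ⟨i, hi⟩ = π.get ⟨j, hj⟩ := by congr 1; exact Fin.ext h
    omega
  have hge3 : ∀ (k : ℕ) (hk : k < π.length), k ≠ i → k ≠ j → 3 ≤ π.get ⟨k, hk⟩ := by
    intro k hk hki hkj
    have hm := hmem _ (List.get_mem π ⟨k, hk⟩)
    have hne1 : π.get ⟨k, hk⟩ ≠ 1 := by
      intro h
      have : (⟨k, hk⟩ : Fin π.length) = ⟨i, hi⟩ := hnd.get_inj_iff.mp (by rw [h, hgi])
      exact hki (by simpa using congrArg Fin.val this)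
    have hne2 : π.get ⟨k, hk⟩ ≠ 2 := by
      intro h
      have : (⟨k, hk⟩ : Fin π.length) = ⟨j, hj⟩ := hnd.get_inj_iff.mp (by rw [h, hgj])
      exact hkj (by simpa using congrArg Fin.val this)
    omega
  by_cases hj2 : j = n - 1
  · -- 2 at the end : fBump
    have hne : π ≠ [] := by intro h; rw [h] at hlen; simp at hlen; omega
    have hget2 : ∀ (k : ℕ) (hk : k < π.length), k = j → π.get ⟨k, hk⟩ = 2 := by
      intro k hk h; subst h; exact hgj
    have hdec : π = π.dropLast ++ [2] := by
      conv_lhs => rw [← List.dropLast_append_getLast hne]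
      congr 1
      rw [List.getLast_eq_getElem]
      exact congrArg (· :: []) (hget2 _ _ (by omega))
    set A := π.dropLast with hAdef
    have hsubA : A <+ π := List.dropLast_sublist π
    have h2A : 2 ∉ A := by
      have hnd2 := hnd
      rw [hdec] at hnd2
      intro hmem2
      rcases List.nodup_append.mp hnd2 with ⟨-, -, hdisj⟩
      exact hdisj _ hmem2 _ (by simp) rfl
    have hperm1 : (2 :: A).Perm π := by
      conv_rhs => rw [hdec]
      simpa using (List.perm_middle (a := 2) (l₁ := A) (l₂ := [])).symm
    have hr : List.range' 1 n = 1 :: 2 :: List.range' 3 (n-2) := by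
      rw [show n = (n-2)+1+1 by omega, List.range'_succ, List.range'_succ]
      norm_num
      omega
    have hA2 : A.Perm (1 :: List.range' 3 (n-2)) := by
      have t : (2 :: A).Perm (2 :: 1 :: List.range' 3 (n-2)) := by
        refine (hperm1.trans hπ).trans ?_
        rw [hr]
        exact (List.Perm.swap 1 2 _).symm
      exact (List.perm_cons 2).mp t
    have hpσ : ((A.map (fun x => (if x = 1 then 2 else x) - 1))).Perm
        (List.range' 1 (n-1)) := by
      refine (hA2.map _).trans ?_
      simp only [List.map_cons]
      rw [List.map_congr_left (g := (· - 1)) (fun x hx => by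
        rw [List.mem_range'_1] at hx
        rw [if_neg (by omega)])]
      rw [map_sub_one_range' (n-2) 2]
      rw [show n - 1 = (n-2)+1 by omega, List.range'_succ]
      norm_num
    refine ⟨A.map (fun x => (if x = 1 then 2 else x) - 1), hpσ, ?_, ?_⟩
    · refine BAvoid.map' _ ?_ (BAvoid.sublist' hsubA hB)
      intro x hx y hy hlt
      have hx2 : x ≠ 2 := fun h => h2A (h ▸ hx)
      have hy2 : y ≠ 2 := fun h => h2A (h ▸ hy)
      have hx1 := (hmem x (hsubA.subset hx)).1
      have hy1 := (hmem y (hsubA.subset hy)).1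
      by_cases ex : x = 1 <;> by_cases ey : y = 1 <;> simp [ex, ey] at hlt <;> omega
    · right; right; right
      unfold fBump
      rw [List.map_map, List.map_map]
      have hid : A.map (((fun x => if x = 2 then 1 else x) ∘
          (· + 1)) ∘ (fun x => (if x = 1 then 2 else x) - 1)) = A := by
        conv_rhs => rw [← List.map_id A]
        refine List.map_congr_left fun x hx => ?_
        have hx2 : x ≠ 2 := fun h => h2A (h ▸ hx)
        have hx1 := (hmem x (hsubA.subset hx)).1
        simp only [Function.comp, id]
        by_cases ex : x = 1
        · simp [ex]
        · rw [if_neg ex, show x - 1 + 1 = x by omega, if_neg hx2]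
      rw [hid]
      exact hdec.symm

  · by_cases hi1 : i = n - 1
    · -- 1 at the end : fEnd
      have hne : π ≠ [] := by intro h; rw [h] at hlen; simp at hlen; omega
      have hget1 : ∀ (k : ℕ) (hk : k < π.length), k = i → π.get ⟨k, hk⟩ = 1 := by
        intro k hk h; subst h; exact hgi
      have hdec : π = π.dropLast ++ [1] := by
        conv_lhs => rw [← List.dropLast_append_getLast hne]
        congr 1
        rw [List.getLast_eq_getElem]
        exact congrArg (· :: []) (hget1 _ _ (by omega))
      set A := π.dropLast with hA
      have hsubA : A <+ π := List.dropLast_sublist π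
      have hperm1 : (1 :: A).Perm π := by
        conv_rhs => rw [hdec]
        simpa using (List.perm_middle (a := 1) (l₁ := A) (l₂ := [])).symm
      refine ⟨A.map (· - 1), perm_aux (by omega) (hperm1.trans hπ), ?_, ?_⟩
      · exact BAvoid.map' _ (fun x hx y hy h => by omega) (BAvoid.sublist' hsubA hB)
      · right; right; left
        show (A.map (· - 1)).map (· + 1) ++ [1] = π
        have hid : (A.map (· - 1)).map (· + 1) = A := by
          rw [List.map_map]
          conv_rhs => rw [← List.map_id A]
          refine List.map_congr_left fun x hx => ?_
          have := (hmem x (hsubA.subset hx)).1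
          simp; omega
        rw [hid]; exact hdec.symm

    · -- both interior
      rcases Nat.lt_or_ge i j with hlt | hge
      · have hadj : j = i + 1 := by
          by_contra hne
          have hib : i + 1 < j := by omega
          have hd : j + 1 < π.length := by omega
          exact hB ⟨i, hi⟩ ⟨i+1, by omega⟩ ⟨j, hj⟩ ⟨j+1, hd⟩
            (Fin.mk_lt_mk.mpr (by omega)) (Fin.mk_lt_mk.mpr (by omega))
            (Fin.mk_lt_mk.mpr (by omega))
            (by
              rw [hgi, hgj]
              have hb3 := hge3 (i+1) (by omega) (by omega) (by omega)
              have hd3 := hge3 (j+1) hd (by omega) (by omega)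
              omega)
        -- fBefore
        have hj' : i + 1 < π.length := by omega
        have hd1 : π.drop i = 1 :: 2 :: π.drop (i+2) := by
          rw [List.drop_eq_getElem_cons hi, List.drop_eq_getElem_cons hj']
          have e1 : π[i]'hi = 1 := hgi
          have e2 : π[i+1]'hj' = 2 := by
            show π.get ⟨i+1, hj'⟩ = 2
            rw [show (⟨i+1, hj'⟩ : Fin π.length) = ⟨j, hj⟩ from Fin.ext (by simp; omega)]
            exact hgj
          rw [e1, e2]
        have hdec : π = π.take i ++ 1 :: 2 :: π.drop (i+2) := by
          conv_lhs => rw [← List.take_append_drop i π, hd1]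
        set A := π.take i with hAdef
        set B := π.drop (i+2) with hBdef
        have h2A : 2 ∉ A := by
          have hnd2 := hnd
          rw [hdec] at hnd2
          intro hmem2
          rcases List.nodup_append.mp hnd2 with ⟨-, -, hdisj⟩
          exact hdisj _ hmem2 _ (by simp) rfl
        have hsub : (A ++ 2 :: B) <+ π := by
          conv_rhs => rw [hdec]
          exact (List.Sublist.refl A).append (List.sublist_cons_self 1 (2 :: B))
        have hperm1 : (1 :: (A ++ 2 :: B)).Perm π := by
          conv_rhs => rw [hdec]
          exact List.perm_middle.symm
        refine ⟨(A ++ 2 :: B).map (· - 1), perm_aux (by omega) (hperm1.trans hπ), ?_, ?_⟩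
        · exact BAvoid.map' _ (fun x hx y hy h => by omega) (BAvoid.sublist' hsub hB)
        · left
          have hplus : (((A ++ 2 :: B).map (· - 1)).map (· + 1)) = A ++ 2 :: B := by
            rw [List.map_map]
            conv_rhs => rw [← List.map_id (A ++ 2 :: B)]
            refine List.map_congr_left fun x hx => ?_
            have := (hmem x (hsub.subset hx)).1
            simp; omega
          unfold fBefore
          rw [hplus, indexOf_append_cons h2A, List.take_left, List.drop_left]
          exact hdec.symm

      · have hlt : j < i := by omega
        have hadj : i = j + 1 := by
          by_contra hne
          have hjb : j + 1 < i := by omega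
          have hd : i + 1 < π.length := by omega
          exact hB ⟨j, hj⟩ ⟨j+1, by omega⟩ ⟨i, hi⟩ ⟨i+1, hd⟩
            (Fin.mk_lt_mk.mpr (by omega)) (Fin.mk_lt_mk.mpr (by omega))
            (Fin.mk_lt_mk.mpr (by omega))
            (by
              rw [hgi, hgj]
              have hb3 := hge3 (j+1) (by omega) (by omega) (by omega)
              have hd3 := hge3 (i+1) hd (by omega) (by omega)
              omega)
        -- fAfter
        have hi' : j + 1 < π.length := by omega
        have hd1 : π.drop j = 2 :: 1 :: π.drop (j+2) := by
          rw [List.drop_eq_getElem_cons hj, List.drop_eq_getElem_cons hi']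
          have e1 : π[j]'hj = 2 := hgj
          have e2 : π[j+1]'hi' = 1 := by
            show π.get ⟨j+1, hi'⟩ = 1
            rw [show (⟨j+1, hi'⟩ : Fin π.length) = ⟨i, hi⟩ from Fin.ext (by simp; omega)]
            exact hgi
          rw [e1, e2]
        have hdec : π = π.take j ++ 2 :: 1 :: π.drop (j+2) := by
          conv_lhs => rw [← List.take_append_drop j π, hd1]
        set A := π.take j with hAdef
        set B := π.drop (j+2) with hBdef
        have h2A : 2 ∉ A := by
          have hnd2 := hnd
          rw [hdec] at hnd2
          intro hmem2
          rcases List.nodup_append.mp hnd2 with ⟨-, -, hdisj⟩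
          exact hdisj _ hmem2 _ (by simp) rfl
        have hsub : (A ++ 2 :: B) <+ π := by
          conv_rhs => rw [hdec]
          exact (List.Sublist.refl A).append
            (List.Sublist.cons₂ 2 (List.sublist_cons_self 1 B))
        have hperm1 : (1 :: (A ++ 2 :: B)).Perm π := by
          conv_rhs => rw [hdec]
          have : π.take j ++ 2 :: 1 :: π.drop (j+2) = (A ++ [2]) ++ 1 :: B := by simp [hAdef, hBdef]
          rw [this]
          have := (List.perm_middle (a := 1) (l₁ := A ++ [2]) (l₂ := B)).symm
          simpa using this
        refine ⟨(A ++ 2 :: B).map (· - 1), perm_aux (by omega) (hperm1.trans hπ), ?_, ?_⟩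
        · exact BAvoid.map' _ (fun x hx y hy h => by omega) (BAvoid.sublist' hsub hB)
        · right; left
          have hplus : (((A ++ 2 :: B).map (· - 1)).map (· + 1)) = A ++ 2 :: B := by
            rw [List.map_map]
            conv_rhs => rw [← List.map_id (A ++ 2 :: B)]
            refine List.map_congr_left fun x hx => ?_
            have := (hmem x (hsub.subset hx)).1
            simp; omega
          unfold fAfter
          rw [hplus, indexOf_append_cons h2A]
          have e5 : A ++ 2 :: B = (A ++ [2]) ++ B := by simp
          have e6 : A.length + 1 = (A ++ [2]).length := by simp
          rw [e5, e6, List.take_left, List.drop_left]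
          rw [hdec]
          simp
end

section
/- For n ≥ 3, the map g sending a permutation to the permutation obtained by deleting the values 1 and 2 and decreasing all remaining values by 2 restricts to a 2-to-1 surjection from the set of B-avoiding permutations of {1,...,n} ending in 12 or 21 onto the set of B-avoiding permutations of {1,...,n-2}; hence the number of B-avoiding permutations of {1,...,n} whose last two values are {1,2} equals twice the number of B-avoiding permutations of {1,...,n-2}. -/
/-- delete the values 1 and 2 and decrease all remaining values by 2. -/
def gMap (π : List ℕ) : List ℕ := ((π.erase 1).erase 2).map (· - 2)

lemma bavoid_iff_s11 (l : List ℕ) : BAvoid l ↔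
    ∀ a b c d : ℕ, (hab : a < b) → (hbc : b < c) → (hcd : c < d) → (h : d < l.length) →
      ¬ (max (l[a]'(by omega)) (l[c]'(by omega)) < min (l[b]'(by omega)) (l[d]'h)) := by
  constructor
  · intro H a b c d hab hbc hcd h
    have := H ⟨a, by omega⟩ ⟨b, by omega⟩ ⟨c, by omega⟩ ⟨d, h⟩ hab hbc hcd
    simpa using this
  · intro H a b c d hab hbc hcd
    have := H a b c d hab hbc hcd d.isLt
    simpa using this

lemma bavoid_map_sub {l : List ℕ} (h3 : ∀ x ∈ l, 3 ≤ x) (h : BAvoid l) :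
    BAvoid (l.map (· - 2)) := by
  rw [bavoid_iff_s11] at *
  intro a b c d hab hbc hcd hd
  simp only [List.length_map] at hd
  have h1 := h a b c d hab hbc hcd hd
  have g3 : ∀ (i : ℕ) (hi : i < l.length), 3 ≤ l[i] := fun i hi => h3 _ (List.getElem_mem hi)
  simp only [List.getElem_map]
  have := g3 a (by omega); have := g3 b (by omega)
  have := g3 c (by omega); have := g3 d hd
  omega

lemma bavoid_map_add {l : List ℕ} (h : BAvoid l) : BAvoid (l.map (· + 2)) := by
  rw [bavoid_iff_s11] at *
  intro a b c d hab hbc hcd hd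
  simp only [List.length_map] at hd
  have h1 := h a b c d hab hbc hcd hd
  simp only [List.getElem_map]
  omega

lemma bavoid_prefix {l s : List ℕ} (h : BAvoid (l ++ s)) : BAvoid l := by
  rw [bavoid_iff_s11] at *
  intro a b c d hab hbc hcd hd
  have hd' : d < (l ++ s).length := by simp; omega
  have h1 := h a b c d hab hbc hcd hd'
  simp only [List.getElem_append, dif_pos (show a < l.length by omega),
    dif_pos (show b < l.length by omega), dif_pos (show c < l.length by omega),
    dif_pos hd] at h1
  exact h1

lemma bavoid_append_small {l : List ℕ} {u v : ℕ} (h3 : ∀ x ∈ l, 3 ≤ x)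
    (hu : u ≤ 2) (hv : v ≤ 2) (h : BAvoid l) : BAvoid (l ++ [u, v]) := by
  rw [bavoid_iff_s11] at *
  intro a b c d hab hbc hcd hd
  simp only [List.length_append, List.length_cons, List.length_nil] at hd
  by_cases hdl : d < l.length
  · have h1 := h a b c d hab hbc hcd hdl
    simp only [List.getElem_append, dif_pos (show a < l.length by omega),
      dif_pos (show b < l.length by omega), dif_pos (show c < l.length by omega),
      dif_pos hdl]
    exact h1
  · have ha : a < l.length := by omega
    have hga : 3 ≤ l[a] := h3 _ (List.getElem_mem ha)
    have huv2 : ∀ (j : ℕ) (hj : j < 2), ([u, v][j]'(by simpa using hj)) ≤ 2 := by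
      intro j hj
      rcases (show j = 0 ∨ j = 1 by omega) with rfl | rfl <;> simpa
    have hgd := huv2 (d - l.length) (by omega)
    simp only [List.getElem_append, dif_pos ha, dif_neg (show ¬ d < l.length by omega)]
    omega

lemma range_split {n : ℕ} (hn : 3 ≤ n) :
    List.range' 1 n = [1, 2] ++ List.range' 3 (n - 2) := by
  have := List.range'_append (s := 1) (m := 2) (n := n - 2) (step := 1)
  simp at this
  rw [show (2 + (n - 2)) = n by omega] at this
  rw [← this]
  norm_num [List.range']

lemma tail_perm {l : List ℕ} {n u v : ℕ} (hn : 3 ≤ n) (huv : [u, v].Perm [1, 2])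
    (h : IsPermOf (l ++ [u, v]) n) : l.Perm (List.range' 3 (n - 2)) := by
  unfold IsPermOf at h
  rw [range_split hn] at h
  have h2 : ([1, 2] ++ l).Perm ([1, 2] ++ List.range' 3 (n - 2)) :=
    ((huv.symm.append_right l).trans (List.perm_append_comm.trans h))
  exact (List.perm_append_left_iff _).mp h2

lemma mem_tail {l : List ℕ} {k : ℕ} (h : l.Perm (List.range' 3 k)) :
    ∀ x ∈ l, 3 ≤ x ∧ x < 3 + k := by
  intro x hx
  have := h.mem_iff.mp hx
  rw [List.mem_range'_1] at this
  omega

lemma gMap_append {l : List ℕ} (h1 : (1 : ℕ) ∉ l) (h2 : (2 : ℕ) ∉ l) {u v : ℕ}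
    (huv : (u = 1 ∧ v = 2) ∨ (u = 2 ∧ v = 1)) :
    gMap (l ++ [u, v]) = l.map (· - 2) := by
  unfold gMap
  rcases huv with ⟨rfl, rfl⟩ | ⟨rfl, rfl⟩
  · rw [List.erase_append_right _ h1, show ([1, 2] : List ℕ).erase 1 = [2] from rfl,
      List.erase_append_right _ h2, show ([2] : List ℕ).erase 2 = [] from rfl,
      List.append_nil]
  · rw [List.erase_append_right _ h1, show ([2, 1] : List ℕ).erase 1 = [2] from rfl,
      List.erase_append_right _ h2, show ([2] : List ℕ).erase 2 = [] from rfl,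
      List.append_nil]

lemma map_sub_add {l : List ℕ} (h3 : ∀ x ∈ l, 3 ≤ x) :
    (l.map (· - 2)).map (· + 2) = l := by
  rw [List.map_map]
  have h : ∀ x ∈ l, ((· + 2) ∘ (· - 2)) x = id x := by
    intro x hx; have := h3 x hx; simp; omega
  rw [List.map_congr_left h, List.map_id]

lemma map_add_sub (l : List ℕ) : (l.map (· + 2)).map (· - 2) = l := by
  rw [List.map_map]
  have h : ∀ x ∈ l, ((· - 2) ∘ (· + 2)) x = id x := by intro x _; simp
  rw [List.map_congr_left h, List.map_id]

lemma range_map_add (k : ℕ) : (List.range' 1 k).map (· + 2) = List.range' 3 k := by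
  have := List.map_add_range' (a := 2) 1 k 1
  simpa [Nat.add_comm] using this

lemma forward {n : ℕ} (hn : 3 ≤ n) (π : List ℕ) (hp : IsPermOf π n) (hb : BAvoid π)
    (hl : ∃ l, π = l ++ [1, 2] ∨ π = l ++ [2, 1]) :
    IsPermOf (gMap π) (n - 2) ∧ BAvoid (gMap π) ∧
      ∃ l, (π = l ++ [1, 2] ∨ π = l ++ [2, 1]) ∧ gMap π = l.map (· - 2) ∧
        l.Perm (List.range' 3 (n - 2)) := by
  obtain ⟨l, hcase⟩ := hl
  have hlp : l.Perm (List.range' 3 (n - 2)) := by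
    rcases hcase with rfl | rfl
    · exact tail_perm hn (List.Perm.refl _) hp
    · exact tail_perm hn (List.Perm.swap 1 2 []) hp
  have h3 : ∀ x ∈ l, 3 ≤ x := fun x hx => (mem_tail hlp x hx).1
  have h1 : (1 : ℕ) ∉ l := fun h => by have := h3 1 h; omega
  have h2 : (2 : ℕ) ∉ l := fun h => by have := h3 2 h; omega
  have hg : gMap π = l.map (· - 2) := by
    rcases hcase with rfl | rfl
    · exact gMap_append h1 h2 (Or.inl ⟨rfl, rfl⟩)
    · exact gMap_append h1 h2 (Or.inr ⟨rfl, rfl⟩)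
  have hbl : BAvoid l := by
    rcases hcase with rfl | rfl <;> exact bavoid_prefix hb
  refine ⟨?_, ?_, l, hcase, hg, hlp⟩
  · unfold IsPermOf
    rw [hg]
    have := hlp.map (· - 2)
    rwa [← range_map_add (n - 2), map_add_sub] at this
  · rw [hg]
    exact bavoid_map_sub h3 hbl

lemma backward {n : ℕ} (hn : 3 ≤ n) (τ : List ℕ) (hp : IsPermOf τ (n - 2)) (hb : BAvoid τ)
    {u v : ℕ} (huv : (u = 1 ∧ v = 2) ∨ (u = 2 ∧ v = 1)) :
    IsPermOf (τ.map (· + 2) ++ [u, v]) n ∧ BAvoid (τ.map (· + 2) ++ [u, v]) ∧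
      gMap (τ.map (· + 2) ++ [u, v]) = τ := by
  have hperm3 : (τ.map (· + 2)).Perm (List.range' 3 (n - 2)) := by
    have := hp.map (· + 2)
    rwa [range_map_add] at this
  have h3 : ∀ x ∈ τ.map (· + 2), 3 ≤ x := fun x hx => (mem_tail hperm3 x hx).1
  have h1 : (1 : ℕ) ∉ τ.map (· + 2) := fun h => by have := h3 1 h; omega
  have h2 : (2 : ℕ) ∉ τ.map (· + 2) := fun h => by have := h3 2 h; omega
  have huvperm : ([u, v] : List ℕ).Perm [1, 2] := by
    rcases huv with ⟨rfl, rfl⟩ | ⟨rfl, rfl⟩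
    · exact List.Perm.refl _
    · exact List.Perm.swap 1 2 []
  refine ⟨?_, ?_, ?_⟩
  · unfold IsPermOf
    rw [range_split hn]
    exact List.perm_append_comm.trans
      ((huvperm.append_right _).trans (hperm3.append_left [1, 2]))
  · have hu : u ≤ 2 := by rcases huv with ⟨rfl, _⟩ | ⟨rfl, _⟩ <;> omega
    have hv : v ≤ 2 := by rcases huv with ⟨_, rfl⟩ | ⟨_, rfl⟩ <;> omega
    exact bavoid_append_small h3 hu hv (bavoid_map_add hb)
  · rw [gMap_append h1 h2 huv, map_add_sub]

lemma ne_pair (l : List ℕ) : l ++ [1, 2] ≠ l ++ [2, 1] := by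
  intro h
  have := List.append_inj_right h rfl
  simp at this

lemma fiber_eq {n : ℕ} (hn : 3 ≤ n) (τ : List ℕ) (hp : IsPermOf τ (n - 2)) (hb : BAvoid τ) :
    {π : List ℕ | IsPermOf π n ∧ BAvoid π ∧
        (∃ l : List ℕ, π = l ++ [1, 2] ∨ π = l ++ [2, 1]) ∧ gMap π = τ} =
      {τ.map (· + 2) ++ [1, 2], τ.map (· + 2) ++ [2, 1]} := by
  ext π
  simp only [Set.mem_setOf_eq, Set.mem_insert_iff, Set.mem_singleton_iff]
  constructor
  · rintro ⟨hπp, hπb, hl, hg⟩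
    obtain ⟨_, _, l, hcase, hgl, hlp⟩ := forward hn π hπp hπb hl
    have h3 : ∀ x ∈ l, 3 ≤ x := fun x hx => (mem_tail hlp x hx).1
    have hlτ : l = τ.map (· + 2) := by rw [← hg, hgl, map_sub_add h3]
    rcases hcase with rfl | rfl
    · left; rw [hlτ]
    · right; rw [hlτ]
  · rintro (rfl | rfl)
    · obtain ⟨a, b, c⟩ := backward hn τ hp hb (Or.inl ⟨rfl, rfl⟩)
      exact ⟨a, b, ⟨_, Or.inl rfl⟩, c⟩
    · obtain ⟨a, b, c⟩ := backward hn τ hp hb (Or.inr ⟨rfl, rfl⟩)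
      exact ⟨a, b, ⟨_, Or.inr rfl⟩, c⟩

theorem stmt11 (n : ℕ) (hn : 3 ≤ n) :
    (∀ π : List ℕ, IsPermOf π n → BAvoid π →
      (∃ l : List ℕ, π = l ++ [1, 2] ∨ π = l ++ [2, 1]) →
      IsPermOf (gMap π) (n - 2) ∧ BAvoid (gMap π)) ∧
    (∀ τ : List ℕ, IsPermOf τ (n - 2) → BAvoid τ →
      {π : List ℕ | IsPermOf π n ∧ BAvoid π ∧
        (∃ l : List ℕ, π = l ++ [1, 2] ∨ π = l ++ [2, 1]) ∧ gMap π = τ}.ncard = 2) ∧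
    {π : List ℕ | IsPermOf π n ∧ BAvoid π ∧
        (∃ l : List ℕ, π = l ++ [1, 2] ∨ π = l ++ [2, 1])}.ncard =
      2 * {τ : List ℕ | IsPermOf τ (n - 2) ∧ BAvoid τ}.ncard := by
  refine ⟨?_, ?_, ?_⟩
  · intro π hp hb hl
    obtain ⟨a, b, _⟩ := forward hn π hp hb hl
    exact ⟨a, b⟩
  · intro τ hp hb
    rw [fiber_eq hn τ hp hb]
    exact Set.ncard_pair (ne_pair _)
  · set T : Set (List ℕ) := {τ : List ℕ | IsPermOf τ (n - 2) ∧ BAvoid τ} with hT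
    set f1 : List ℕ → List ℕ := fun τ => τ.map (· + 2) ++ [1, 2] with hf1
    set f2 : List ℕ → List ℕ := fun τ => τ.map (· + 2) ++ [2, 1] with hf2
    have hmapinj : Function.Injective (fun τ : List ℕ => τ.map (· + 2)) :=
      List.map_injective_iff.mpr (fun a b h => by omega)
    have hinj1 : Function.Injective f1 := by
      intro a b h
      exact hmapinj (List.append_inj_left' h rfl)
    have hinj2 : Function.Injective f2 := by
      intro a b h
      exact hmapinj (List.append_inj_left' h rfl)
    have hTfin : T.Finite := by
      apply Set.Finite.subset (List.finite_toSet ((List.range' 1 (n - 2)).permutations))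
      intro τ hτ
      simpa [List.mem_permutations, IsPermOf] using hτ.1
    have hSeq : {π : List ℕ | IsPermOf π n ∧ BAvoid π ∧
        (∃ l : List ℕ, π = l ++ [1, 2] ∨ π = l ++ [2, 1])} = f1 '' T ∪ f2 '' T := by
      ext π
      simp only [Set.mem_setOf_eq, Set.mem_union, Set.mem_image, hT, hf1, hf2]
      constructor
      · rintro ⟨hp, hb, hl⟩
        obtain ⟨hτp, hτb, l, hcase, hgl, hlp⟩ := forward hn π hp hb hl
        have h3 : ∀ x ∈ l, 3 ≤ x := fun x hx => (mem_tail hlp x hx).1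
        have hlτ : l = (gMap π).map (· + 2) := by rw [hgl, map_sub_add h3]
        rcases hcase with rfl | rfl
        · left; exact ⟨gMap (l ++ [1, 2]), ⟨hτp, hτb⟩, by rw [← hlτ]⟩
        · right; exact ⟨gMap (l ++ [2, 1]), ⟨hτp, hτb⟩, by rw [← hlτ]⟩
      · rintro (⟨τ, ⟨hτp, hτb⟩, rfl⟩ | ⟨τ, ⟨hτp, hτb⟩, rfl⟩)
        · obtain ⟨a, b, _⟩ := backward hn τ hτp hτb (Or.inl ⟨rfl, rfl⟩)
          exact ⟨a, b, _, Or.inl rfl⟩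
        · obtain ⟨a, b, _⟩ := backward hn τ hτp hτb (Or.inr ⟨rfl, rfl⟩)
          exact ⟨a, b, _, Or.inr rfl⟩
    have hdisj : Disjoint (f1 '' T) (f2 '' T) := by
      rw [Set.disjoint_left]
      rintro π ⟨a, _, rfl⟩ ⟨b, _, heq⟩
      have := congrArg List.getLast? heq
      simp [hf1, hf2, List.getLast?_append] at this
    rw [hSeq, Set.ncard_union_eq hdisj (hTfin.image _) (hTfin.image _),
      Set.ncard_image_of_injective _ hinj1, Set.ncard_image_of_injective _ hinj2]
    ring
end
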